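/- Let b, c be nonnegative integers with c ≤ b and b odd. Then Δ'(-b/2; b, c) = (-1)^{c(b-c)} · 2^c · ∏_{i=1}^{b-c} (i - b/2)_c/(i)_c. -/

import Mathlib

open Finset

/-- Generalized binomial coefficient `C(x,k)`. -/
def gbinom (x : ℚ) (k : ℤ) : ℚ :=
  if 0 ≤ k then (∏ m ∈ Finset.range k.toNat, (x - m)) / (k.toNat.factorial : ℚ) else 0

/-- Shifted factorial `(a)_k` with integer index. -/
def poch (a : ℚ) (k : ℤ) : ℚ :=
  if 0 ≤ k then ∏ m ∈ Finset.range k.toNat, (a + m)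
  else 1 / ∏ m ∈ Finset.range (-k).toNat, (a - (m + 1))

/-- The matrix `M(x;b,c)`. -/
def Mmat (x : ℚ) (b c : ℕ) : Matrix (Fin (b + c)) (Fin (b + c)) ℚ := fun i j =>
  if (i : ℕ) < c then
    (if (j : ℕ) < b then gbinom (x + (j : ℕ)) ((i : ℕ) : ℤ)
     else gbinom (2 * x + (j : ℕ)) ((i : ℕ) : ℤ))
  else if (i : ℕ) < b then
    (if (j : ℕ) < c then 0
     else if (j : ℕ) < b then gbinom (x + (j : ℕ)) ((i : ℕ) : ℤ)
     else gbinom (2 * x + (j : ℕ)) ((i : ℕ) : ℤ))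
  else
    (if (j : ℕ) < c then 2 * gbinom (x + (j : ℕ)) (((i : ℕ) : ℤ) - (b : ℤ))
     else if (j : ℕ) < b then gbinom (x + (j : ℕ)) (((i : ℕ) : ℤ) - (b : ℤ))
     else 0)

/-- `Δ(x;b,c)`. -/
def Δdet (x : ℚ) (b c : ℕ) : ℚ := (Mmat x b c).det

/-- The matrix `M'(x;b,c)`; column index `j` of the paper is `c + j'`. -/
def M'mat (x : ℚ) (b c : ℕ) : Matrix (Fin b) (Fin b) ℚ := fun i j =>
  if c + (j : ℕ) < b then
    gbinom (x + (c : ℕ)) (((i : ℕ) : ℤ) - ((c : ℤ) + (j : ℕ)) + (c : ℤ))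
  else if (i : ℕ) < c then
    2 * gbinom (2 * x + (b : ℕ)) (((i : ℕ) : ℤ) - ((c : ℤ) + (j : ℕ)) + (b : ℤ))
  else
    gbinom (2 * x + (b : ℕ)) (((i : ℕ) : ℤ) - ((c : ℤ) + (j : ℕ)) + (b : ℤ))

/-- `Δ'(x;b,c)`. -/
def Δ'det (x : ℚ) (b c : ℕ) : ℚ := (M'mat x b c).det

lemma gbinom_neg (x : ℚ) {k : ℤ} (hk : k < 0) : gbinom x k = 0 := if_neg (not_le.mpr hk)

lemma gbinom_natCast (x : ℚ) (k : ℕ) :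
    gbinom x (k : ℤ) = (∏ m ∈ Finset.range k, (x - m)) / (k.factorial : ℚ) := by
  simp [gbinom]

lemma gbinom_zero (x : ℚ) : gbinom x 0 = 1 := by simp [gbinom]

lemma gbinom_zero_left (k : ℤ) : gbinom 0 k = if k = 0 then 1 else 0 := by
  rcases lt_trichotomy k 0 with hk | rfl | hk
  · rw [gbinom_neg _ hk, if_neg (by omega)]
  · simp [gbinom_zero]
  · rw [if_neg (by omega)]
    obtain ⟨t, rfl⟩ : ∃ t : ℕ, k = ((t : ℤ) + 1) := ⟨(k - 1).toNat, by omega⟩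
    rw [show ((t:ℤ)+1) = ((t+1 : ℕ) : ℤ) by push_cast; ring, gbinom_natCast]
    rw [Finset.prod_eq_zero (Finset.mem_range.mpr (Nat.succ_pos t)) (by norm_num)]
    simp

lemma gbinom_pascal (x : ℚ) (k : ℤ) :
    gbinom x k = gbinom (x - 1) k + gbinom (x - 1) (k - 1) := by
  rcases lt_trichotomy k 0 with hk | rfl | hk
  · rw [gbinom_neg _ hk, gbinom_neg _ hk, gbinom_neg _ (by omega)]; norm_num
  · rw [gbinom_zero, gbinom_zero, gbinom_neg _ (by omega)]; norm_num
  · obtain ⟨t, rfl⟩ : ∃ t : ℕ, k = ((t : ℤ) + 1) := ⟨(k - 1).toNat, by omega⟩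
    rw [show ((t:ℤ)+1) - 1 = ((t:ℕ):ℤ) by ring]
    rw [show ((t:ℤ)+1) = ((t+1 : ℕ) : ℤ) by push_cast; ring]
    rw [gbinom_natCast, gbinom_natCast, gbinom_natCast]
    have h1 : ∏ m ∈ range (t+1), (x - m) = (∏ m ∈ range t, (x - 1 - m)) * x := by
      rw [Finset.prod_range_succ']
      congr 1
      · exact Finset.prod_congr rfl fun m _ => by push_cast; ring
      · norm_num
    have h2 : ∏ m ∈ range (t+1), (x - 1 - m) = (∏ m ∈ range t, (x - 1 - m)) * (x - 1 - t) :=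
      Finset.prod_range_succ _ _
    rw [h1, h2, Nat.factorial_succ]
    have ht : (t.factorial : ℚ) ≠ 0 := Nat.cast_ne_zero.mpr t.factorial_ne_zero
    have ht1 : ((t:ℚ) + 1) ≠ 0 := by positivity
    field_simp
    push_cast
    ring

lemma gbinom_vandermonde (N : ℕ) (x : ℚ) (K : ℤ) :
    gbinom (x + N) K = ∑ u ∈ range (N + 1), (N.choose u : ℚ) * gbinom x (K - u) := by
  induction N generalizing K with
  | zero => simp
  | succ N ih =>
    have key : gbinom (x + (N+1 : ℕ)) K = gbinom (x + N) K + gbinom (x + N) (K - 1) := by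
      have := gbinom_pascal (x + (N+1 : ℕ)) K
      rw [show x + ((N+1 : ℕ) : ℚ) - 1 = x + N by push_cast; ring] at this
      exact this
    rw [key, ih, ih]
    rw [Finset.sum_range_succ' (fun u => ((N+1).choose u : ℚ) * gbinom x (K - u)) (N+1)]
    have hsplit : ∀ u ∈ range (N + 1),
        (((N+1).choose (u+1) : ℚ)) * gbinom x (K - (u+1 : ℕ))
          = ((N.choose u : ℚ)) * gbinom x ((K - 1) - u)
            + ((N.choose (u+1) : ℚ)) * gbinom x (K - (u+1 : ℕ)) := by
      intro u _
      rw [Nat.choose_succ_succ]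
      push_cast
      rw [show K - ((u : ℤ) + 1) = (K - 1) - u by ring]
      ring
    rw [Finset.sum_congr rfl hsplit, Finset.sum_add_distrib]
    have h2 : ∑ u ∈ range (N+1), ((N.choose (u+1) : ℚ)) * gbinom x (K - (u+1:ℕ))
        = ∑ u ∈ range (N+1), ((N.choose u : ℚ)) * gbinom x (K - u) - gbinom x K := by
      rw [Finset.sum_range_succ' (fun u => ((N.choose u : ℚ)) * gbinom x (K - u)) N]
      rw [Finset.sum_range_succ]
      simp [Nat.choose_succ_self]
    rw [h2]
    simp only [Nat.choose_zero_right, Nat.cast_one, one_mul]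
    ring_nf

lemma gbinom_alt (j : ℕ) (y : ℚ) (w : ℤ) :
    ∑ l ∈ range (j + 1), (-1 : ℚ) ^ l * (j.choose l : ℚ) * gbinom (y - l) (w - l)
      = gbinom (y - j) w := by
  induction j generalizing y w with
  | zero => simp
  | succ j ih =>
    rw [Finset.sum_range_succ'
      (fun l => (-1 : ℚ) ^ l * ((j+1).choose l : ℚ) * gbinom (y - l) (w - l)) (j+1)]
    have hsplit : ∀ l ∈ range (j + 1),
        (-1 : ℚ) ^ (l+1) * (((j+1).choose (l+1) : ℚ)) * gbinom (y - (l+1:ℕ)) (w - (l+1:ℕ))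
          = -((-1 : ℚ) ^ l * (j.choose l : ℚ) * gbinom ((y-1) - l) ((w-1) - l))
            + (-1 : ℚ) ^ (l+1) * ((j.choose (l+1) : ℚ)) * gbinom (y - (l+1:ℕ)) (w - (l+1:ℕ)) := by
      intro l _
      rw [Nat.choose_succ_succ]
      push_cast
      rw [show y - ((l : ℚ) + 1) = (y - 1) - l by ring, show w - ((l : ℤ) + 1) = (w - 1) - l by ring]
      ring
    rw [Finset.sum_congr rfl hsplit, Finset.sum_add_distrib]
    have h1 : ∑ l ∈ range (j+1),
        -((-1 : ℚ) ^ l * (j.choose l : ℚ) * gbinom ((y-1) - l) ((w-1) - l))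
        = -gbinom ((y-1) - j) (w-1) := by
      rw [Finset.sum_neg_distrib, ih]
    have h2 : ∑ l ∈ range (j+1),
        (-1 : ℚ) ^ (l+1) * ((j.choose (l+1) : ℚ)) * gbinom (y - (l+1:ℕ)) (w - (l+1:ℕ))
        = gbinom (y - j) w - gbinom y w := by
      have := Finset.sum_range_succ'
        (fun l => (-1 : ℚ) ^ l * (j.choose l : ℚ) * gbinom (y - l) (w - l)) j
      rw [ih] at this
      have hlast : ∑ l ∈ range (j+1),
          (-1:ℚ)^(l+1) * ((j.choose (l+1) : ℚ)) * gbinom (y - (l+1:ℕ)) (w - (l+1:ℕ))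
          = ∑ l ∈ range j, (-1:ℚ)^(l+1) * ((j.choose (l+1) : ℚ)) * gbinom (y - (l+1:ℕ)) (w - (l+1:ℕ)) := by
        rw [Finset.sum_range_succ]
        simp [Nat.choose_succ_self]
      rw [hlast]
      push_cast at this ⊢
      simp only [Nat.choose_zero_right, sub_zero, Nat.cast_one, one_mul, pow_zero] at this
      ring_nf at this ⊢
      linarith [this]
    rw [h1, h2]
    simp only [pow_zero, Nat.choose_zero_right, Nat.cast_one, one_mul, Nat.cast_zero, sub_zero,
      Nat.cast_ofNat, Nat.cast_add]
    have hp := gbinom_pascal (y - j) w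
    ring_nf
    ring_nf at hp
    linarith [hp]

def T1mat (n : ℕ) : Matrix (Fin n) (Fin n) ℚ :=
  Matrix.of fun l j => if (j:ℕ) ≤ (l:ℕ) then ((n - 1 - (j:ℕ)).choose ((l:ℕ) - (j:ℕ)) : ℚ) else 0

def T2mat (n : ℕ) : Matrix (Fin n) (Fin n) ℚ :=
  Matrix.of fun l j => if (l:ℕ) ≤ (j:ℕ) then (-1 : ℚ) ^ ((j:ℕ) - (l:ℕ)) * ((j:ℕ).choose (l:ℕ) : ℚ) else 0

lemma det_T1mat (n : ℕ) : (T1mat n).det = 1 := by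
  rw [Matrix.det_of_lowerTriangular (T1mat n)
    (fun i j h => by
      simp only [T1mat, Matrix.of_apply]
      rw [if_neg (by exact_mod_cast not_le.mpr (by exact_mod_cast h))])]
  simp [T1mat]

lemma det_T2mat (n : ℕ) : (T2mat n).det = 1 := by
  rw [Matrix.det_of_upperTriangular
    (show (T2mat n).BlockTriangular id from fun i j h => by
      simp only [T2mat, Matrix.of_apply]
      rw [if_neg (by exact_mod_cast not_le.mpr (by exact_mod_cast h))])]
  simp [T2mat]

def Bmat (n c : ℕ) (x : ℚ) : Matrix (Fin n) (Fin n) ℚ :=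
  Matrix.of fun i j => gbinom x ((c : ℤ) + (i:ℕ) - (j:ℕ))

def Gmat (n c : ℕ) (x : ℚ) : Matrix (Fin n) (Fin n) ℚ :=
  Matrix.of fun i j => gbinom (x + ((n - 1 - (j:ℕ) : ℕ) : ℚ)) ((c : ℤ) + (i:ℕ) - (j:ℕ))

def Hmat (n c : ℕ) (x : ℚ) : Matrix (Fin n) (Fin n) ℚ :=
  Matrix.of fun i j =>
    (-1 : ℚ) ^ (j:ℕ) * gbinom ((x + ((n - 1 : ℕ) : ℚ)) - (j:ℕ)) ((c : ℤ) + (i:ℕ))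

lemma B_mul_T1 (n c : ℕ) (x : ℚ) : Bmat n c x * T1mat n = Gmat n c x := by
  ext i j
  rw [Matrix.mul_apply]
  simp only [Bmat, Gmat, T1mat, Matrix.of_apply]
  rw [Fin.sum_univ_eq_sum_range (fun l =>
    gbinom x ((c : ℤ) + (i:ℕ) - l) *
      (if (j:ℕ) ≤ l then ((n - 1 - (j:ℕ)).choose (l - (j:ℕ)) : ℚ) else 0)) n]
  rw [gbinom_vandermonde (n - 1 - (j:ℕ)) x ((c : ℤ) + (i:ℕ) - (j:ℕ))]
  have hj : (j:ℕ) < n := j.isLt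
  rw [show (range n) = range ((j:ℕ) + ((n - 1 - (j:ℕ)) + 1)) from by
    rw [show (j:ℕ) + ((n - 1 - (j:ℕ)) + 1) = n by omega], Finset.sum_range_add]
  rw [Finset.sum_eq_zero (fun l hl => by
    rw [if_neg (by exact not_le.mpr (Finset.mem_range.mp hl)), mul_zero])]
  rw [zero_add]
  refine Finset.sum_congr rfl fun u _ => ?_
  rw [if_pos (Nat.le_add_right _ _), Nat.add_sub_cancel_left]
  rw [show (c : ℤ) + (i:ℕ) - ((j:ℕ) + u : ℕ) = (c : ℤ) + (i:ℕ) - (j:ℕ) - u by push_cast; ring]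
  ring

lemma G_mul_T2 (n c : ℕ) (x : ℚ) : Gmat n c x * T2mat n = Hmat n c x := by
  ext i j
  rw [Matrix.mul_apply]
  simp only [Gmat, Hmat, T2mat, Matrix.of_apply]
  rw [Fin.sum_univ_eq_sum_range (fun l =>
    gbinom (x + ((n - 1 - l : ℕ) : ℚ)) ((c : ℤ) + (i:ℕ) - l) *
      (if l ≤ (j:ℕ) then (-1 : ℚ) ^ ((j:ℕ) - l) * ((j:ℕ).choose l : ℚ) else 0)) n]
  have hj : (j:ℕ) < n := j.isLt
  rw [show (range n) = range (((j:ℕ) + 1) + (n - 1 - (j:ℕ))) from by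
    rw [show ((j:ℕ) + 1) + (n - 1 - (j:ℕ)) = n by omega], Finset.sum_range_add]
  have hz : ∀ l ∈ range (n - 1 - (j:ℕ)),
      gbinom (x + ((n - 1 - ((j:ℕ) + 1 + l) : ℕ) : ℚ)) ((c : ℤ) + (i:ℕ) - (((j:ℕ) + 1 + l : ℕ) : ℕ)) *
        (if ((j:ℕ) + 1 + l) ≤ (j:ℕ) then
          (-1 : ℚ) ^ ((j:ℕ) - ((j:ℕ) + 1 + l)) * (((j:ℕ)).choose ((j:ℕ) + 1 + l) : ℚ) else 0) = 0 :=
    fun l _ => by rw [if_neg (by omega), mul_zero]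
  rw [Finset.sum_eq_zero hz, add_zero]
  rw [← gbinom_alt (j:ℕ) (x + ((n - 1 : ℕ) : ℚ)) ((c : ℤ) + (i:ℕ)), Finset.mul_sum]
  refine Finset.sum_congr rfl fun l hl => ?_
  have hlj : l ≤ (j:ℕ) := by have := Finset.mem_range.mp hl; omega
  rw [if_pos hlj]
  have hcast : x + ((n - 1 - l : ℕ) : ℚ) = (x + ((n - 1 : ℕ) : ℚ)) - l := by
    rw [Nat.cast_sub (by omega)]; ring
  have hsgn : (-1 : ℚ) ^ ((j:ℕ) - l) = (-1 : ℚ) ^ (j:ℕ) * (-1 : ℚ) ^ l := by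
    have h : (j:ℕ) + l = ((j:ℕ) - l) + 2 * l := by omega
    have := pow_add (-1 : ℚ) (j:ℕ) l
    rw [h, pow_add, pow_mul] at this
    simpa using this
  rw [hcast, hsgn]
  rw [show (c : ℤ) + (i:ℕ) - l = ((c : ℤ) + (i:ℕ)) - l by ring]
  ring

open Polynomial in
lemma det_Hmat (n' c : ℕ) (x : ℚ) :
    (Hmat (n' + 1) c x).det =
      (∏ j : Fin (n' + 1), ((-1:ℚ) ^ (j:ℕ) * ∏ s ∈ range c, (x + (n' : ℚ) - j - s))) *
      ((∏ i : Fin (n' + 1), (((c + (i:ℕ)).factorial : ℚ))⁻¹) *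
       ((∏ i : Fin (n' + 1), (-1:ℚ) ^ (i:ℕ)) * (Nat.superFactorial n' : ℚ))) := by
  set y : ℚ := x + (n' : ℚ) with hy
  set r : Fin (n' + 1) → ℚ[X] :=
    fun i => ∏ s ∈ range (i:ℕ), (X - C (y - ((c:ℚ) + s))) with hr
  set V : Matrix (Fin (n' + 1)) (Fin (n' + 1)) ℚ :=
    Matrix.of (fun i j => ∏ s ∈ range (i:ℕ), (y - (j:ℕ) - ((c:ℚ) + s))) with hV
  have hH : Hmat (n' + 1) c x = Matrix.of fun (i j : Fin (n' + 1)) =>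
      ((-1:ℚ) ^ (j:ℕ) * ∏ s ∈ range c, (y - (j:ℕ) - s)) *
      (Matrix.of (fun i j : Fin (n' + 1) => (((c + (i:ℕ)).factorial : ℚ))⁻¹ * V i j) i j) := by
    ext i j
    simp only [Hmat, Matrix.of_apply, hV, Nat.add_sub_cancel, ← hy]
    have h1 : (c:ℤ) + (i:ℕ) = ((c + (i:ℕ) : ℕ) : ℤ) := by push_cast; ring
    rw [h1, gbinom_natCast, Finset.prod_range_add]
    have h2 : ∏ s ∈ range (i:ℕ), (y - (j:ℕ) - ((c + s : ℕ):ℚ))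
        = ∏ s ∈ range (i:ℕ), (y - (j:ℕ) - ((c:ℚ) + s)) :=
      Finset.prod_congr rfl fun s _ => by push_cast; ring
    rw [h2]
    have hF : (((c + (i:ℕ)).factorial : ℚ)) ≠ 0 :=
      Nat.cast_ne_zero.mpr (Nat.factorial_ne_zero _)
    field_simp
  rw [hH, Matrix.det_mul_row, Matrix.det_mul_column]
  have hdeg : ∀ i : Fin (n' + 1), (r i).natDegree = (i:ℕ) := fun i => by
    rw [hr, Polynomial.natDegree_prod_of_monic _ _ (fun s _ => monic_X_sub_C _)]
    simp only [Polynomial.natDegree_X_sub_C, Finset.sum_const, Finset.card_range,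
      smul_eq_mul, mul_one]
  have hmon : ∀ i : Fin (n' + 1), (r i).Monic :=
    fun i => monic_prod_of_monic _ _ (fun s _ => monic_X_sub_C _)
  have hVW : V = Matrix.of fun (i j : Fin (n' + 1)) => ((-1:ℚ) ^ (i:ℕ)) *
      Matrix.transpose (Matrix.of (fun a b : Fin (n' + 1) => Polynomial.eval (((a:ℕ) : ℚ)) (r b))) i j := by
    ext i j
    simp only [Matrix.of_apply, Matrix.transpose_apply, hV, hr, Polynomial.eval_prod,
      Polynomial.eval_sub, Polynomial.eval_X, Polynomial.eval_C]
    have hstep : ∀ s ∈ range (i:ℕ),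
        (y - (j:ℕ) - ((c:ℚ) + s)) = (-1) * ((((j:ℕ) : ℚ)) - (y - ((c:ℚ) + s))) := by
      intro s _; ring
    rw [Finset.prod_congr rfl hstep, Finset.prod_mul_distrib, Finset.prod_const,
      Finset.card_range]
  have hW : (Matrix.of (fun a b : Fin (n' + 1) => Polynomial.eval (((a:ℕ) : ℚ)) (r b))).det
      = (Nat.superFactorial n' : ℚ) := by
    rw [← Matrix.det_eval_matrixOfPolynomials_eq_det_vandermonde
      (fun a : Fin (n' + 1) => (((a:ℕ) : ℚ))) r hdeg hmon]
    exact Matrix.det_vandermonde_id_eq_superFactorial n'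
  have hdV : V.det = (∏ i : Fin (n' + 1), (-1:ℚ) ^ (i:ℕ)) * (Nat.superFactorial n' : ℚ) := by
    rw [hVW, Matrix.det_mul_column, Matrix.det_transpose, hW]
  rw [hdV]

theorem toeplitz_det (n c : ℕ) (x : ℚ) :
    (Bmat n c x).det
      = ∏ i ∈ range n,
          ((∏ s ∈ range c, (x + i - s)) * (i.factorial : ℚ) / ((c + i).factorial : ℚ)) := by
  rcases n with _ | n'
  · simp
  have h1 : (Bmat (n' + 1) c x).det = (Gmat (n' + 1) c x).det := by
    rw [← B_mul_T1, Matrix.det_mul, det_T1mat, mul_one]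
  have h2 : (Gmat (n' + 1) c x).det = (Hmat (n' + 1) c x).det := by
    rw [← G_mul_T2, Matrix.det_mul, det_T2mat, mul_one]
  rw [h1, h2, det_Hmat n' c x, Finset.prod_mul_distrib]
  simp only [Fin.prod_univ_eq_prod_range]
  rw [Fin.prod_univ_eq_prod_range (fun j => ∏ s ∈ range c, (x + (n' : ℚ) - j - s)) (n' + 1),
    Fin.prod_univ_eq_prod_range (fun i => (((c + i).factorial : ℚ))⁻¹) (n' + 1)]
  set Sr := ∏ j ∈ range (n' + 1), (-1 : ℚ) ^ j with hSr
  set Pr := ∏ j ∈ range (n' + 1), ∏ s ∈ range c, (x + (n' : ℚ) - j - s) with hPr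
  set Ir := ∏ i ∈ range (n' + 1), (((c + i).factorial : ℚ))⁻¹ with hIr
  have hS : Sr * Sr = 1 := by
    rw [hSr, ← Finset.prod_mul_distrib]
    apply Finset.prod_eq_one
    intro j _
    rw [← pow_add]
    exact Even.neg_one_pow ⟨j, rfl⟩
  have hsf : (Nat.superFactorial n' : ℚ) = ∏ j ∈ range (n' + 1), (j.factorial : ℚ) := by
    rw [← Nat.prod_range_succ_factorial n', Nat.cast_prod]
  have hrefl1 : Pr = ∏ j ∈ range (n' + 1), ∏ s ∈ range c, (x + (j : ℚ) - s) := by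
    rw [hPr, ← Finset.prod_range_reflect (fun j => ∏ s ∈ range c, (x + (j : ℚ) - s)) (n' + 1)]
    refine Finset.prod_congr rfl fun j hj => Finset.prod_congr rfl fun s _ => ?_
    have hj' : j ≤ n' := by have := Finset.mem_range.mp hj; omega
    have hc : ((n' + 1 - 1 - j : ℕ) : ℚ) = (n' : ℚ) - j := by
      rw [show n' + 1 - 1 - j = n' - j from rfl, Nat.cast_sub hj']
    rw [hc]
    ring
  have key : ∏ i ∈ range (n' + 1),
      ((∏ s ∈ range c, (x + i - s)) * (i.factorial : ℚ) / ((c + i).factorial : ℚ))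
      = Pr * (Ir * ∏ j ∈ range (n' + 1), (j.factorial : ℚ)) := by
    rw [hrefl1, ← Finset.prod_mul_distrib, ← Finset.prod_mul_distrib]
    refine Finset.prod_congr rfl fun i _ => ?_
    rw [div_eq_mul_inv]
    ring
  rw [key, hsf]
  have : Sr * Pr * (Ir * (Sr * ∏ j ∈ range (n' + 1), (j.factorial : ℚ)))
      = (Sr * Sr) * (Pr * (Ir * ∏ j ∈ range (n' + 1), (j.factorial : ℚ))) := by ring
  rw [this, hS, one_mul]

lemma rot_apply (n' k : ℕ) (j : Fin (n' + 1)) :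
    (((finRotate (n' + 1)) ^ k) j : ℕ) = ((j : ℕ) + k) % (n' + 1) := by
  induction k generalizing j with
  | zero => simp [Nat.mod_eq_of_lt j.isLt]
  | succ k ih =>
    rw [pow_succ, Equiv.Perm.mul_apply, ih (finRotate (n' + 1) j)]
    rw [finRotate_succ_apply, Fin.val_add, Fin.val_one']
    rw [Nat.mod_add_mod]
    rw [show (j : ℕ) + 1 % (n' + 1) + k = ((j : ℕ) + k) + 1 % (n' + 1) by ring]
    rw [Nat.add_mod ((j:ℕ) + k) (1 % (n' + 1)), Nat.mod_mod_of_dvd _ dvd_rfl,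
      ← Nat.add_mod]
    rw [show (j : ℕ) + k + 1 = (j : ℕ) + (k + 1) by ring]

lemma prod_fact_ratio (i c : ℕ) :
    ∏ m ∈ range c, ((i : ℚ) + 1 + m) = (((c + i).factorial : ℚ)) / ((i.factorial : ℚ)) := by
  induction c with
  | zero => simp [div_self (Nat.cast_ne_zero.mpr (Nat.factorial_ne_zero i) : (i.factorial : ℚ) ≠ 0)]
  | succ c ih =>
    rw [Finset.prod_range_succ, ih]
    have h1 : (i.factorial : ℚ) ≠ 0 := Nat.cast_ne_zero.mpr (Nat.factorial_ne_zero _)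
    rw [show c + 1 + i = (c + i) + 1 by ring, Nat.factorial_succ]
    field_simp
    push_cast
    ring

lemma poch_natCast (a : ℚ) (c : ℕ) : poch a (c : ℤ) = ∏ m ∈ range c, (a + m) := by
  simp [poch]

/-- The value of `Δ'(x;b,c)` at `x = -b/2` for odd `b` (expression (2.6)). -/
theorem delta'_at_minus_half_b (b c : ℕ) (hcb : c ≤ b) (hb : Odd b) :
    Δ'det (-(b : ℚ) / 2) b c =
      (-1 : ℚ) ^ (c * (b - c)) * 2 ^ c *
        ∏ i ∈ Finset.Icc 1 (b - c),
          poch ((i : ℚ) - (b : ℚ) / 2) (c : ℤ) / poch (i : ℚ) (c : ℤ) := by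
  obtain ⟨b', rfl⟩ : ∃ b', b = b' + 1 := ⟨b - 1, by have := hb.pos; omega⟩
  set n := b' + 1 - c with hn
  have hcn : c + n = b' + 1 := by omega
  set x : ℚ := -(((b' + 1 : ℕ) : ℚ)) / 2 with hx
  have h2xb : 2 * x + ((b' + 1 : ℕ) : ℚ) = 0 := by rw [hx]; push_cast; ring
  set σ : Equiv.Perm (Fin (b' + 1)) := (finRotate (b' + 1)) ^ n with hσ
  have hσval : ∀ j : Fin (b' + 1), ((σ j : Fin (b' + 1)) : ℕ) = ((j : ℕ) + n) % (b' + 1) :=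
    fun j => rot_apply b' n j
  set e : Fin c ⊕ Fin n ≃ Fin (b' + 1) := finSumFinEquiv.trans (finCongr hcn) with he
  have hel : ∀ i : Fin c, ((e (Sum.inl i) : Fin (b' + 1)) : ℕ) = (i : ℕ) := fun i => by
    simp [he, finSumFinEquiv_apply_left]
  have her : ∀ j : Fin n, ((e (Sum.inr j) : Fin (b' + 1)) : ℕ) = c + (j : ℕ) := fun j => by
    simp [he, finSumFinEquiv_apply_right]
  set A2 : Matrix (Fin c) (Fin c) ℚ := Matrix.of fun i j => if i = j then (2:ℚ) else 0 with hA2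
  set Bb : Matrix (Fin c) (Fin n) ℚ :=
    Matrix.of fun i j => gbinom (x + (c:ℕ)) (((i:ℕ) : ℤ) - ((j:ℕ) : ℤ)) with hBb
  -- the block identity
  have hblock : ((M'mat x (b' + 1) c).submatrix id ⇑σ).submatrix ⇑e ⇑e
      = Matrix.fromBlocks A2 Bb 0 (Bmat n c (x + (c:ℕ))) := by
    ext i j
    rcases i with i | i <;> rcases j with j | j <;>
      simp only [Matrix.submatrix_apply, id_eq, Matrix.fromBlocks_apply₁₁,
        Matrix.fromBlocks_apply₁₂, Matrix.fromBlocks_apply₂₁, Matrix.fromBlocks_apply₂₂]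
    · -- (inl i, inl j) : 2I block
      have hq : ((σ (e (Sum.inl j)) : Fin (b' + 1)) : ℕ) = (j : ℕ) + n := by
        rw [hσval, hel, Nat.mod_eq_of_lt (by omega)]
      simp only [M'mat]
      rw [hq, hel]
      rw [if_neg (by omega), if_pos (by omega : (i:ℕ) < c)]
      rw [h2xb]
      have harg : ((i:ℕ) : ℤ) - ((c : ℤ) + (((j:ℕ) + n : ℕ) : ℤ)) + ((b' + 1 : ℕ) : ℤ)
          = ((i:ℕ) : ℤ) - ((j:ℕ) : ℤ) := by push_cast; omega
      rw [harg, gbinom_zero_left, hA2, Matrix.of_apply]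
      by_cases hij : i = j
      · subst hij
        rw [if_pos (show ((i:ℕ) : ℤ) - ((i:ℕ) : ℤ) = 0 by omega), if_pos rfl]
        norm_num
      · rw [if_neg (by
          intro hcon
          exact hij (Fin.ext (by omega : (i:ℕ) = (j:ℕ)))), if_neg hij]
        norm_num
    · -- (inl i, inr j) : Bb block
      have hq : ((σ (e (Sum.inr j)) : Fin (b' + 1)) : ℕ) = (j : ℕ) := by
        rw [hσval, her, show c + (j:ℕ) + n = (j:ℕ) + (b' + 1) by omega,
          Nat.add_mod_right, Nat.mod_eq_of_lt (by have := j.isLt; omega)]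
      simp only [M'mat]
      rw [hq, hel]
      rw [if_pos (by omega)]
      have harg : ((i:ℕ) : ℤ) - ((c : ℤ) + ((j:ℕ) : ℤ)) + (c : ℤ)
          = ((i:ℕ) : ℤ) - ((j:ℕ) : ℤ) := by ring
      rw [harg, hBb]
      rfl
    · -- (inr i, inl j) : zero block
      have hq : ((σ (e (Sum.inl j)) : Fin (b' + 1)) : ℕ) = (j : ℕ) + n := by
        rw [hσval, hel, Nat.mod_eq_of_lt (by omega)]
      simp only [M'mat]
      rw [hq, her]
      rw [if_neg (by omega), if_neg (by omega)]
      rw [h2xb]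
      have harg : ((c + (i:ℕ) : ℕ) : ℤ) - ((c : ℤ) + (((j:ℕ) + n : ℕ) : ℤ)) + ((b' + 1 : ℕ) : ℤ)
          = ((c : ℤ) + (i:ℕ)) - ((j:ℕ) : ℤ) := by push_cast; omega
      rw [harg, gbinom_zero_left, if_neg (by omega)]
      rfl
    · -- (inr i, inr j) : Toeplitz block
      have hq : ((σ (e (Sum.inr j)) : Fin (b' + 1)) : ℕ) = (j : ℕ) := by
        rw [hσval, her, show c + (j:ℕ) + n = (j:ℕ) + (b' + 1) by omega,
          Nat.add_mod_right, Nat.mod_eq_of_lt (by have := j.isLt; omega)]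
      simp only [M'mat]
      rw [hq, her]
      rw [if_pos (by omega)]
      have harg : ((c + (i:ℕ) : ℕ) : ℤ) - ((c : ℤ) + ((j:ℕ) : ℤ)) + (c : ℤ)
          = (c : ℤ) + ((i:ℕ) : ℤ) - ((j:ℕ) : ℤ) := by push_cast; ring
      rw [harg, Bmat]
      rfl
  -- determinant of the 2I block
  have hA2det : A2.det = 2 ^ c := by
    have h1 : A2 = (2:ℚ) • (1 : Matrix (Fin c) (Fin c) ℚ) := by
      ext i j
      simp [hA2, Matrix.one_apply, mul_ite]
    rw [h1, Matrix.det_smul, Matrix.det_one, Fintype.card_fin, mul_one]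
  have hsub : ((M'mat x (b' + 1) c).submatrix id ⇑σ).det
      = 2 ^ c * (Bmat n c (x + (c:ℕ))).det := by
    rw [← Matrix.det_submatrix_equiv_self e, hblock, Matrix.det_fromBlocks_zero₂₁, hA2det]
  have hperm := Matrix.det_permute' σ (M'mat x (b' + 1) c)
  have hsgn : ((Equiv.Perm.sign σ : ℤ) : ℚ) = (-1 : ℚ) ^ (c * n) := by
    have hpar : (-1 : ℚ) ^ (b' * n) = (-1 : ℚ) ^ (c * n) := by
      rcases Nat.eq_zero_or_pos n with h0 | hpos
      · rw [h0]; simp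
      · have hb' : b' = c + (n - 1) := by omega
        rw [hb', add_mul, pow_add]
        have hev : Even ((n - 1) * n) := by
          have h := Nat.even_mul_succ_self (n - 1)
          rwa [show n - 1 + 1 = n by omega] at h
        rw [hev.neg_one_pow, mul_one]
    rw [hσ, map_pow, sign_finRotate, ← hpar]
    push_cast [Units.val_pow_eq_pow_val]
    rw [pow_mul]
  have hsgn2 : ((Equiv.Perm.sign σ : ℤ) : ℚ) * ((Equiv.Perm.sign σ : ℤ) : ℚ) = 1 := by
    rcases Int.units_eq_one_or (Equiv.Perm.sign σ) with h | h <;> rw [h] <;> norm_num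
  have hdetM' : (M'mat x (b' + 1) c).det
      = (-1 : ℚ) ^ (c * n) * (2 ^ c * (Bmat n c (x + (c:ℕ))).det) := by
    calc (M'mat x (b' + 1) c).det
        = (((Equiv.Perm.sign σ : ℤ) : ℚ) * ((Equiv.Perm.sign σ : ℤ) : ℚ))
            * (M'mat x (b' + 1) c).det := by rw [hsgn2, one_mul]
      _ = ((Equiv.Perm.sign σ : ℤ) : ℚ) * (((M'mat x (b' + 1) c).submatrix id ⇑σ).det) := by
          rw [hperm]; ring
      _ = (-1 : ℚ) ^ (c * n) * (2 ^ c * (Bmat n c (x + (c:ℕ))).det) := by rw [hsub, hsgn]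
  have hterm : ∀ i ∈ range n,
      poch (((1 + i : ℕ) : ℚ) - ((b' + 1 : ℕ) : ℚ) / 2) (c:ℤ) / poch (((1 + i : ℕ)) : ℚ) (c:ℤ)
        = (∏ s ∈ range c, ((x + (c:ℕ)) + i - s)) * ((i.factorial : ℚ))
            / (((c + i).factorial : ℚ)) := by
    intro i _
    rw [poch_natCast, poch_natCast]
    have hden : ∏ m ∈ range c, (((1 + i : ℕ) : ℚ) + m)
        = (((c + i).factorial : ℚ)) / ((i.factorial : ℚ)) := by
      rw [← prod_fact_ratio i c]
      exact Finset.prod_congr rfl fun m _ => by push_cast; ring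
    have hnum : ∏ s ∈ range c, ((x + (c:ℕ)) + i - s)
        = ∏ m ∈ range c, ((((1 + i : ℕ) : ℚ) - ((b' + 1 : ℕ) : ℚ) / 2) + m) := by
      rw [← Finset.prod_range_reflect
        (fun m => ((((1 + i : ℕ) : ℚ) - ((b' + 1 : ℕ) : ℚ) / 2) + m)) c]
      refine Finset.prod_congr rfl fun s hs => ?_
      have hs' : s < c := Finset.mem_range.mp hs
      have hcast : ((c - 1 - s : ℕ) : ℚ) = (c : ℚ) - 1 - s := by
        rw [Nat.cast_sub (by omega), Nat.cast_sub (by omega)]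
        push_cast
        ring
      rw [hcast, hx]
      push_cast
      ring
    rw [hden, hnum, div_div_eq_mul_div]
  have hIcc : (∏ i ∈ Finset.Icc 1 n,
        (poch ((i:ℚ) - ((b' + 1 : ℕ) : ℚ) / 2) (c:ℤ) / poch ((i:ℚ)) (c:ℤ)))
      = ∏ i ∈ range n,
        (poch (((1 + i : ℕ) : ℚ) - ((b' + 1 : ℕ) : ℚ) / 2) (c:ℤ)
          / poch (((1 + i : ℕ)) : ℚ) (c:ℤ)) := by
    rw [← Finset.Ico_add_one_right_eq_Icc, Finset.prod_Ico_eq_prod_range]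
    simp
  rw [Δ'det, hdetM', toeplitz_det]
  rw [show ((b' + 1 : ℕ) : ℚ) = ((b' + 1 : ℕ) : ℚ) from rfl]
  rw [hIcc, Finset.prod_congr rfl hterm]
  ring
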